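/- If a chord c in a signed oriented chord diagram is odd, then the integer N(c) assigned to it is even, where N(c) = x − y if w(c) = +1 and N(c) = z − w if w(c) = −1, with x, y (resp. z, w) being the arc labels just before and after the relevant endpoints of c as in the definition of the odd writhe polynomial. -/

import Mathlib

open Finset LaurentPolynomial

/-- A signed, oriented chord diagram (combinatorial Gauss diagram) with `n` chords:
the `2*n` chord endpoints on the circle are the elements of `Fin (2*n)` in (positive)
cyclic order; chord `i` has over endpoint `c⁺ = ep (i, true)`, under endpoint
`c⁻ = ep (i, false)` and a sign (writhe) `sign i ∈ {1, -1}`. -/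
structure ChordDiagram (n : ℕ) where
  ep : Fin n × Bool ≃ Fin (2 * n)
  sign : Fin n → ℤ
  sign_unit : ∀ i, sign i = 1 ∨ sign i = -1

namespace ChordDiagram

variable {n : ℕ}

/-- the over endpoint `c⁺` of a chord -/
def over' (D : ChordDiagram n) (i : Fin n) : Fin (2 * n) := D.ep (i, true)

/-- the under endpoint `c⁻` of a chord -/
def under (D : ChordDiagram n) (i : Fin n) : Fin (2 * n) := D.ep (i, false)

/-- the number of steps from `b` to `x`, travelling in the positive direction
around the circle -/
def relpos (b x : Fin (2 * n)) : ℕ := (x.val + 2 * n - b.val) % (2 * n)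

/-- `x` lies strictly between the endpoints of chord `i`, on the side swept out
going from `c⁺` to `c⁻` in the positive direction -/
def StrictlyBetween (D : ChordDiagram n) (i : Fin n) (x : Fin (2 * n)) : Prop :=
  0 < relpos (D.over' i) x ∧ relpos (D.over' i) x < relpos (D.over' i) (D.under i)

instance (D : ChordDiagram n) (i : Fin n) (x : Fin (2 * n)) :
    Decidable (D.StrictlyBetween i x) := inferInstanceAs (Decidable (_ ∧ _))

/-- two distinct chords interlink if their endpoints alternate around the circle,
i.e. exactly one endpoint of `j` lies strictly between the endpoints of `i` -/
def Interlinks (D : ChordDiagram n) (i j : Fin n) : Prop :=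
  i ≠ j ∧ Xor (D.StrictlyBetween i (D.over' j)) (D.StrictlyBetween i (D.under j))

instance (D : ChordDiagram n) (i j : Fin n) : Decidable (D.Interlinks i j) :=
  inferInstanceAs (Decidable (_ ∧ _))

/-- the number of chords interlinking chord `i` -/
def interlinkCount (D : ChordDiagram n) (i : Fin n) : ℕ :=
  (univ.filter fun j => D.Interlinks i j).card

/-- the number of chord endpoints lying (strictly) on one side of chord `i` -/
def sideCount (D : ChordDiagram n) (i : Fin n) : ℕ :=
  (univ.filter fun x => D.StrictlyBetween i x).card

/-- a chord is odd if it interlinks an odd number of other chords -/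
def OddChord (D : ChordDiagram n) (i : Fin n) : Prop := Odd (D.interlinkCount i)

instance (D : ChordDiagram n) (i : Fin n) : Decidable (D.OddChord i) :=
  inferInstanceAs (Decidable (Odd _))

/-- The label `N(a)` of the arc whose terminal point is `a`: the sum of the signs of
all chords whose over endpoint is met strictly before their under endpoint when
traversing the circle once in the positive direction starting inside this arc. -/
def arcLabel (D : ChordDiagram n) (a : Fin (2 * n)) : ℤ :=
  ∑ i ∈ univ.filter fun i => relpos a (D.over' i) < relpos a (D.under i), D.sign i

/-- The value `N(c)` of a chord: for a positive chord, the difference `x - y` of the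
arc labels just before `c⁺` and just before `c⁻`; for a negative chord, the difference
`z - w` of the arc labels just after `c⁺` and just after `c⁻` (the label just after an
over endpoint is the label just before it minus the sign, and the label just after an
under endpoint is the label just before it plus the sign). -/
def chordVal (D : ChordDiagram n) (i : Fin n) : ℤ :=
  if D.sign i = 1 then D.arcLabel (D.over' i) - D.arcLabel (D.under i)
  else (D.arcLabel (D.over' i) - D.sign i) - (D.arcLabel (D.under i) + D.sign i)

/-- the odd writhe `J(K) = Σ_{c odd} w(c)` -/
def oddWrithe (D : ChordDiagram n) : ℤ :=
  ∑ i ∈ univ.filter fun i => D.OddChord i, D.sign i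

/-- the odd writhe polynomial `f_K(t) = Σ_{c odd} w(c) · t^{N(c)} ∈ ℤ[t,t⁻¹]` -/
noncomputable def owp (D : ChordDiagram n) : LaurentPolynomial ℤ :=
  ∑ i ∈ univ.filter fun i => D.OddChord i, C (D.sign i) * T (D.chordVal i)

/-- evaluation of the odd writhe polynomial at a rational number `x`:
`Σ_{c odd} w(c) · x^{N(c)}` -/
def owpEval (D : ChordDiagram n) (x : ℚ) : ℚ :=
  ∑ i ∈ univ.filter fun i => D.OddChord i, (D.sign i : ℚ) * x ^ D.chordVal i

/-- the coefficient of `t^k` in a Laurent polynomial -/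
def coeffOf (f : LaurentPolynomial ℤ) (k : ℤ) : ℤ := f.coeff k

/-- the degree `Deg f = max { |i| : coefficient of tⁱ in f is nonzero }` -/
def owpDeg (f : LaurentPolynomial ℤ) : ℕ := f.coeff.support.sup fun k => k.natAbs

/-- reversing the orientation of the knot: the cyclic order of the endpoints is
reversed, while signs and over/under data of the crossings are preserved -/
def reverse (D : ChordDiagram n) : ChordDiagram n where
  ep := D.ep.trans Fin.revPerm
  sign := D.sign
  sign_unit := D.sign_unit

/-- the mirror image: every crossing is switched, so every chord's over and under
endpoints are exchanged and its sign is negated -/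
def mirror (D : ChordDiagram n) : ChordDiagram n where
  ep := (Equiv.prodCongr (Equiv.refl (Fin n))
      ⟨fun b => !b, fun b => !b, Bool.not_not, Bool.not_not⟩).trans D.ep
  sign := fun i => -D.sign i
  sign_unit := fun i => (D.sign_unit i).elim
    (fun h => Or.inr (show -D.sign i = -1 by rw [h]))
    (fun h => Or.inl (show -D.sign i = 1 by rw [h]; ring))

/-! ### Planarity via the Euler characteristic of the carrier surface

The diagram determines a 4-valent graph (vertices = chords, edges = the `2*n` arcs of
the circle) together with a rotation system at each vertex, coming from the structure
of a transversal crossing: for a positive crossing the counterclockwise order of the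
four ends is (over-out, under-out, over-in, under-in), for a negative crossing it is
(over-out, under-in, over-in, under-out).  The diagram is realizable by a classical
(planar) knot diagram iff the resulting closed oriented carrier surface is a sphere,
i.e. iff `V - E + F = n - 2n + F = 2`.

Darts are encoded as pairs `(p, io) : Fin (2*n) × Bool`, meaning the end of an arc
at the vertex through the circle point `p`, with `io = true` for the outgoing arc
(from `p` to `p+1`) and `io = false` for the incoming arc (from `p-1` to `p`). -/

/-- the other endpoint of the chord through a given endpoint -/
def otherEnd (D : ChordDiagram n) (p : Fin (2 * n)) : Fin (2 * n) :=
  D.ep ((D.ep.symm p).1, !(D.ep.symm p).2)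

lemma otherEnd_otherEnd (D : ChordDiagram n) (p : Fin (2 * n)) :
    D.otherEnd (D.otherEnd p) = p := by
  simp [otherEnd]

/-- whether the rotation at the vertex toggles the in/out marker when passing from
the end at `p` to the end at the other endpoint of its chord -/
def tog (D : ChordDiagram n) (p : Fin (2 * n)) : Bool :=
  if D.sign (D.ep.symm p).1 = 1 then !(D.ep.symm p).2 else (D.ep.symm p).2

/-- the vertex rotation permutation on darts -/
def vertexPerm (D : ChordDiagram n) : Equiv.Perm (Fin (2 * n) × Bool) :=
  Equiv.trans
    ⟨fun x => (x.1, xor x.2 (D.tog x.1)), fun x => (x.1, xor x.2 (D.tog x.1)),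
      fun x => by simp [Bool.xor_assoc], fun x => by simp [Bool.xor_assoc]⟩
    ⟨fun x => (D.otherEnd x.1, x.2), fun x => (D.otherEnd x.1, x.2),
      fun x => by simp [otherEnd_otherEnd], fun x => by simp [otherEnd_otherEnd]⟩

/-- the edge involution on darts, matching the two ends of each arc -/
def arcPerm (D : ChordDiagram n) : Equiv.Perm (Fin (2 * n) × Bool) :=
  ⟨fun x => if x.2 then (finRotate (2 * n) x.1, false) else ((finRotate (2 * n)).symm x.1, true),
   fun x => if x.2 then (finRotate (2 * n) x.1, false) else ((finRotate (2 * n)).symm x.1, true),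
   fun x => by rcases x with ⟨p, _ | _⟩ <;> simp [-finRotate_apply, -finRotate_symm_apply],
   fun x => by rcases x with ⟨p, _ | _⟩ <;> simp [-finRotate_apply, -finRotate_symm_apply]⟩

/-- the face permutation on darts -/
def facePerm (D : ChordDiagram n) : Equiv.Perm (Fin (2 * n) × Bool) :=
  (D.arcPerm).trans D.vertexPerm

/-- the number of faces: the number of orbits of the face permutation -/
noncomputable def faceCount (D : ChordDiagram n) : ℕ :=
  Nat.card (MulAction.orbitRel.Quotient (Subgroup.zpowers D.facePerm) (Fin (2 * n) × Bool))

/-- the chord diagram arises from a classical (planar) knot diagram: the carrier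
surface has Euler characteristic `V - E + F = n - 2n + faceCount = 2` -/
def PlanarRealizable (D : ChordDiagram n) : Prop := D.faceCount = n + 2

end ChordDiagram


open ChordDiagram

section Helpers

variable {n : ℕ}

lemma relpos_spec (hn : 0 < n) (a x : Fin (2 * n)) :
    relpos a x = if x.val < a.val then x.val + 2 * n - a.val else x.val - a.val := by
  have hx := x.isLt
  have ha := a.isLt
  unfold relpos
  split_ifs with h
  · exact Nat.mod_eq_of_lt (by omega)
  · have h2 : x.val + 2 * n - a.val = (x.val - a.val) + (2 * n) * 1 := by omega
    rw [h2, Nat.add_mul_mod_self_left]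
    exact Nat.mod_eq_of_lt (by omega)

lemma relpos_cases (hn : 0 < n) (a x : Fin (2 * n)) :
    (x.val < a.val ∧ relpos a x = x.val + 2 * n - a.val) ∨
      (a.val ≤ x.val ∧ relpos a x = x.val - a.val) := by
  rcases Nat.lt_or_ge x.val a.val with h | h
  · exact Or.inl ⟨h, by rw [relpos_spec hn]; simp [h]⟩
  · exact Or.inr ⟨h, by rw [relpos_spec hn]; simp [Nat.not_lt.mpr h]⟩

end Helpers

open scoped symmDiff

/-- if a chord is odd then the integer `N(c)` assigned to it is even. -/
theorem stmt_4 {n : ℕ} (D : ChordDiagram n) (i : Fin n) (h : D.OddChord i) :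
    Even (D.chordVal i) := by
  classical
  have hn : 0 < n := i.pos
  have hval : ∀ (j k : Fin n) (s t : Bool), (j, s) ≠ (k, t) →
      (D.ep (j, s)).val ≠ (D.ep (k, t)).val := fun j k s t hne h =>
    hne (D.ep.injective (Fin.val_injective h))
  set SA := Finset.univ.filter
    (fun j => relpos (D.over' i) (D.over' j) < relpos (D.over' i) (D.under j)) with hSA
  set SB := Finset.univ.filter
    (fun j => relpos (D.under i) (D.over' j) < relpos (D.under i) (D.under j)) with hSB
  -- the symmetric difference of the two filter sets
  have hsd : SA ∆ SB = insert i (Finset.univ.filter fun j => D.Interlinks i j) := by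
    ext j
    simp only [Finset.mem_symmDiff, hSA, hSB, Finset.mem_filter, Finset.mem_univ,
      true_and, Finset.mem_insert]
    have hb1 := (D.over' i).isLt
    have hb2 := (D.under i).isLt
    have hb3 := (D.over' j).isLt
    have hb4 := (D.under j).isLt
    have hab : (D.over' i).val ≠ (D.under i).val := hval i i true false (by simp)
    by_cases hj : j = i
    · subst hj
      have c1 := relpos_cases hn (D.over' j) (D.over' j)
      have c2 := relpos_cases hn (D.over' j) (D.under j)
      have c3 := relpos_cases hn (D.under j) (D.over' j)
      have c4 := relpos_cases hn (D.under j) (D.under j)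
      exact iff_of_true (Or.inl ⟨by omega, by omega⟩) (Or.inl rfl)
    · have hji : i ≠ j := Ne.symm hj
      have h1 : (D.over' j).val ≠ (D.over' i).val := hval j i true true (by simp [hj])
      have h2 : (D.under j).val ≠ (D.over' i).val := hval j i false true (by simp)
      have h3 : (D.over' j).val ≠ (D.under i).val := hval j i true false (by simp)
      have h4 : (D.under j).val ≠ (D.under i).val := hval j i false false (by simp [hj])
      have h5 : (D.over' j).val ≠ (D.under j).val := hval j j true false (by simp)
      have c1 := relpos_cases hn (D.over' i) (D.over' j)
      have c2 := relpos_cases hn (D.over' i) (D.under j)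
      have c3 := relpos_cases hn (D.under i) (D.over' j)
      have c4 := relpos_cases hn (D.under i) (D.under j)
      have c5 := relpos_cases hn (D.over' i) (D.under i)
      simp only [hj, false_or, Interlinks, StrictlyBetween, Xor, ne_eq, hji,
        not_false_iff, true_and]
      omega
  have hi_not : i ∉ Finset.univ.filter fun j => D.Interlinks i j := by
    rw [Finset.mem_filter]; exact fun h => h.2.1 rfl
  have hcard : (SA ∆ SB).card = D.interlinkCount i + 1 := by
    rw [hsd, Finset.card_insert_of_notMem hi_not, interlinkCount]
  -- parity of the cardinalities
  have h1 := Finset.card_sdiff_add_card_inter SA SB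
  have h2 := Finset.card_sdiff_add_card_inter SB SA
  have h3 : (SA ∆ SB).card = (SA \ SB).card + (SB \ SA).card := by
    rw [symmDiff_def, Finset.sup_eq_union]
    exact Finset.card_union_of_disjoint disjoint_sdiff_sdiff
  have h4 : (SA ∩ SB).card = (SB ∩ SA).card := by rw [Finset.inter_comm]
  have hodd : Odd (D.interlinkCount i) := h
  obtain ⟨k, hk⟩ := hodd
  have hcardpar : (SA.card + SB.card) % 2 = 0 := by omega
  -- parity of sums of signs
  have hmod : ∀ s : Finset (Fin n), (∑ j ∈ s, D.sign j) % 2 = (s.card : ℤ) % 2 := by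
    intro s
    rw [Finset.sum_int_mod]
    have hone : ∀ j ∈ s, D.sign j % 2 = 1 := fun j _ => by
      rcases D.sign_unit j with hs | hs <;> rw [hs] <;> decide
    rw [Finset.sum_congr rfl hone, Finset.sum_const]
    simp
  have hA : D.arcLabel (D.over' i) = ∑ j ∈ SA, D.sign j := by rw [hSA]; rfl
  have hB : D.arcLabel (D.under i) = ∑ j ∈ SB, D.sign j := by rw [hSB]; rfl
  have hEv : Even (D.arcLabel (D.over' i) - D.arcLabel (D.under i)) := by
    rw [Int.even_iff]
    have hA' := hmod SA
    have hB' := hmod SB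
    rw [← hA] at hA'
    rw [← hB] at hB'
    omega
  obtain ⟨m, hm⟩ := hEv
  rcases D.sign_unit i with hs | hs
  · rw [chordVal, if_pos hs]
    exact ⟨m, hm⟩
  · rw [chordVal, if_neg (by rw [hs]; decide), hs]
    exact ⟨m + 1, by omega⟩
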